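/- arXiv:1609.03849 — 2 statements merged into one kernel-verified Lean document; each statement's English description precedes it below -/
import Mathlib

section
/- Crenel boundaries, part 1 (Proposition 5.3(1)). Let d≥1, 0<r_0≤1, and let Λ⊂ℝ^d satisfy |p−q|≥r_0 for all p≠q∈Λ. Then for every ℓ≥1 and a∈ℝ^d there exist a compact set Γ⊂ℝ^d and a bi-Lipschitz homeomorphism f from K_ℓ(a) onto Γ with sup_{x∈K_ℓ(a)}|f(x)−x| ≤ 1, such that every p∈Λ∩Γ satisfies dist(p,∂Γ) ≥ r_0/8. -/
open MeasureTheory Metric Set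

/-- The closed axis-parallel cube of sidelength `l` centered at `a`. -/
def cube (d : ℕ) (a : EuclideanSpace ℝ (Fin d)) (l : ℝ) : Set (EuclideanSpace ℝ (Fin d)) :=
  {x | ∀ i, |x i - a i| ≤ l / 2}

namespace Stmt11Aux

open RealInnerProductSpace

/-! ### Radial maps -/

noncomputable def radialMap {E : Type*} [NormedAddCommGroup E] [InnerProductSpace ℝ E]
    (φ : ℝ → ℝ) (c : E) (x : E) : E :=
  c + (φ ‖x - c‖ / ‖x - c‖) • (x - c)

section Radial
variable {E : Type*} [NormedAddCommGroup E] [InnerProductSpace ℝ E]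

lemma radialMap_of_eq {φ : ℝ → ℝ} {c x : E} (h : φ ‖x - c‖ = ‖x - c‖) :
    radialMap φ c x = x := by
  rcases eq_or_ne x c with rfl | hxc
  · simp [radialMap]
  · have hn : ‖x - c‖ ≠ 0 := by simpa [sub_eq_zero] using hxc
    rw [radialMap, h, div_self hn, one_smul]
    abel

lemma radialMap_norm {φ : ℝ → ℝ} (hφ0 : φ 0 = 0) (hnn : ∀ r, 0 ≤ r → 0 ≤ φ r)
    (c x : E) : ‖radialMap φ c x - c‖ = φ ‖x - c‖ := by
  rcases eq_or_ne x c with rfl | hxc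
  · simp [radialMap, hφ0]
  · have hn : ‖x - c‖ ≠ 0 := by simpa [sub_eq_zero] using hxc
    rw [radialMap, add_sub_cancel_left, norm_smul]
    rw [Real.norm_eq_abs, abs_div, abs_of_nonneg (hnn _ (norm_nonneg _)),
      abs_of_nonneg (norm_nonneg _), div_mul_cancel₀ _ hn]

lemma key_sq {lam L A B r s ip : ℝ} (hlam : 0 ≤ lam) (hL : 0 ≤ L)
    (hrpos : 0 < r) (hspos : 0 < s) (hip : ip ≤ r * s)
    (hA1 : lam * r ≤ A) (hA2 : A ≤ L * r) (hB1 : lam * s ≤ B) (hB2 : B ≤ L * s)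
    (hd1 : lam * |r - s| ≤ |A - B|) (hd2 : |A - B| ≤ L * |r - s|) :
    lam ^ 2 * (r ^ 2 + s ^ 2 - 2 * ip) ≤ A ^ 2 + B ^ 2 - 2 * (A / r) * (B / s) * ip ∧
      A ^ 2 + B ^ 2 - 2 * (A / r) * (B / s) * ip ≤ L ^ 2 * (r ^ 2 + s ^ 2 - 2 * ip) := by
  have hrs : 0 < r * s := mul_pos hrpos hspos
  have ht : 0 ≤ r * s - ip := by linarith
  have hA0 : 0 ≤ A := le_trans (by positivity) hA1
  have hB0 : 0 ≤ B := le_trans (by positivity) hB1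
  have e : A ^ 2 + B ^ 2 - 2 * (A / r) * (B / s) * ip
      = (A - B) ^ 2 + 2 * ((A * B) / (r * s)) * (r * s - ip) := by
    field_simp
    ring
  have h1 : lam ^ 2 * (r * s) ≤ A * B := by
    calc lam ^ 2 * (r * s) = (lam * r) * (lam * s) := by ring
    _ ≤ A * B := mul_le_mul hA1 hB1 (by positivity) hA0
  have h2 : A * B ≤ L ^ 2 * (r * s) := by
    calc A * B ≤ (L * r) * (L * s) :=
          mul_le_mul hA2 hB2 hB0 (by positivity)
    _ = L ^ 2 * (r * s) := by ring
  have hK2 : (A * B) / (r * s) ≤ L ^ 2 := by rw [div_le_iff₀ hrs]; linarith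
  have hK1 : lam ^ 2 ≤ (A * B) / (r * s) := by rw [le_div_iff₀ hrs]; linarith
  have hsq2 : (A - B) ^ 2 ≤ L ^ 2 * (r - s) ^ 2 := by
    have h := mul_le_mul hd2 hd2 (by positivity) (by positivity)
    calc (A - B) ^ 2 = |A - B| * |A - B| := by rw [abs_mul_abs_self]; ring
    _ ≤ (L * |r - s|) * (L * |r - s|) := h
    _ = L ^ 2 * (|r - s| * |r - s|) := by ring
    _ = L ^ 2 * (r - s) ^ 2 := by rw [abs_mul_abs_self]; ring
  have hsq1 : lam ^ 2 * (r - s) ^ 2 ≤ (A - B) ^ 2 := by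
    have h := mul_le_mul hd1 hd1 (by positivity) (abs_nonneg _)
    calc lam ^ 2 * (r - s) ^ 2 = lam ^ 2 * (|r - s| * |r - s|) := by
          rw [abs_mul_abs_self]; ring
    _ = (lam * |r - s|) * (lam * |r - s|) := by ring
    _ ≤ |A - B| * |A - B| := h
    _ = (A - B) ^ 2 := by rw [abs_mul_abs_self]; ring
  have k1 := mul_le_mul_of_nonneg_right hK1 ht
  have k2 := mul_le_mul_of_nonneg_right hK2 ht
  constructor
  · rw [e]
    have idl : lam ^ 2 * (r ^ 2 + s ^ 2 - 2 * ip)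
        = lam ^ 2 * (r - s) ^ 2 + 2 * (lam ^ 2 * (r * s - ip)) := by ring
    linarith
  · rw [e]
    have idl : L ^ 2 * (r ^ 2 + s ^ 2 - 2 * ip)
        = L ^ 2 * (r - s) ^ 2 + 2 * (L ^ 2 * (r * s - ip)) := by ring
    linarith

lemma sq_le_imp {a b : ℝ} (hb : 0 ≤ b) (h : a ^ 2 ≤ b ^ 2) : a ≤ b := by nlinarith

lemma radialMap_dist_bounds {φ : ℝ → ℝ} {lam L : ℝ} (hlam : 0 < lam) (hφ0 : φ 0 = 0)
    (hslope : ∀ r s : ℝ, 0 ≤ r → r ≤ s → lam * (s - r) ≤ φ s - φ r ∧ φ s - φ r ≤ L * (s - r))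
    (c x y : E) :
    lam * dist x y ≤ dist (radialMap φ c x) (radialMap φ c y) ∧
    dist (radialMap φ c x) (radialMap φ c y) ≤ L * dist x y := by
  have hratio : ∀ r : ℝ, 0 ≤ r → lam * r ≤ φ r ∧ φ r ≤ L * r := by
    intro r hr
    obtain ⟨h1, h2⟩ := hslope 0 r le_rfl hr
    rw [hφ0] at h1 h2
    constructor <;> linarith
  have hL : 0 < L := by
    obtain ⟨h1, h2⟩ := hslope 0 1 le_rfl zero_le_one
    nlinarith
  have habs : ∀ r s : ℝ, 0 ≤ r → 0 ≤ s →
      lam * |r - s| ≤ |φ r - φ s| ∧ |φ r - φ s| ≤ L * |r - s| := by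
    intro r s hr hs
    rcases le_total r s with h | h
    · obtain ⟨h1, h2⟩ := hslope r s hr h
      have hge : (0:ℝ) ≤ lam * (s - r) := mul_nonneg hlam.le (by linarith)
      rw [abs_of_nonpos (by linarith), abs_of_nonpos (by linarith)]
      constructor <;> linarith
    · obtain ⟨h1, h2⟩ := hslope s r hs h
      have hge : (0:ℝ) ≤ lam * (r - s) := mul_nonneg hlam.le (by linarith)
      rw [abs_of_nonneg (by linarith), abs_of_nonneg (by linarith)]
      constructor <;> linarith
  have hgd : dist (radialMap φ c x) (radialMap φ c y)
      = ‖(φ ‖x - c‖ / ‖x - c‖) • (x - c) - (φ ‖y - c‖ / ‖y - c‖) • (y - c)‖ := by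
    rw [dist_eq_norm, radialMap, radialMap, add_sub_add_left_eq_sub]
  have hdxy : dist x y = ‖(x - c) - (y - c)‖ := by
    rw [dist_eq_norm, sub_sub_sub_cancel_right]
  by_cases hx0 : x - c = 0
  · rw [hgd, hdxy, hx0]
    simp only [norm_zero, hφ0, zero_div, zero_smul, zero_sub, norm_neg]
    by_cases hy0 : y - c = 0
    · rw [hy0]; simp
    · have hn : ‖y - c‖ ≠ 0 := by simpa using hy0
      have h0 : 0 ≤ φ ‖y - c‖ := le_trans (by positivity) (hratio _ (norm_nonneg _)).1
      rw [norm_smul, Real.norm_eq_abs, abs_div, abs_of_nonneg h0,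
        abs_of_nonneg (norm_nonneg _), div_mul_cancel₀ _ hn]
      exact (hratio _ (norm_nonneg _))
  by_cases hy0 : y - c = 0
  · rw [hgd, hdxy, hy0]
    simp only [norm_zero, hφ0, zero_div, zero_smul, sub_zero]
    have hn : ‖x - c‖ ≠ 0 := by simpa using hx0
    have h0 : 0 ≤ φ ‖x - c‖ := le_trans (by positivity) (hratio _ (norm_nonneg _)).1
    rw [norm_smul, Real.norm_eq_abs, abs_div, abs_of_nonneg h0,
      abs_of_nonneg (norm_nonneg _), div_mul_cancel₀ _ hn]
    exact (hratio _ (norm_nonneg _))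
  have hrpos : 0 < ‖x - c‖ := norm_pos_iff.mpr hx0
  have hspos : 0 < ‖y - c‖ := norm_pos_iff.mpr hy0
  set p := x - c with hpdef
  set q := y - c with hqdef
  set r := ‖p‖ with hrdef
  set s := ‖q‖ with hsdef
  set A := φ r with hAdef
  set B := φ s with hBdef
  have hip : ⟪p, q⟫ ≤ r * s := real_inner_le_norm p q
  have key := key_sq (A := A) (B := B) (ip := ⟪p, q⟫) hlam.le hL.le hrpos hspos hip
      (hratio r hrpos.le).1 (hratio r hrpos.le).2 (hratio s hspos.le).1 (hratio s hspos.le).2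
      (habs r s hrpos.le hspos.le).1 (habs r s hrpos.le hspos.le).2
  have egd : dist (radialMap φ c x) (radialMap φ c y) ^ 2
      = A ^ 2 + B ^ 2 - 2 * (A / r) * (B / s) * ⟪p, q⟫ := by
    rw [hgd, ← real_inner_self_eq_norm_sq]
    simp only [inner_sub_left, inner_sub_right, real_inner_smul_left, real_inner_smul_right,
      real_inner_self_eq_norm_sq, real_inner_comm q p, norm_smul, Real.norm_eq_abs, mul_pow,
      sq_abs]
    rw [← hrdef, ← hsdef]
    field_simp
    ring
  have edxy : dist x y ^ 2 = r ^ 2 + s ^ 2 - 2 * ⟪p, q⟫ := by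
    rw [hdxy, ← real_inner_self_eq_norm_sq, inner_sub_sub_self,
      real_inner_self_eq_norm_sq, real_inner_self_eq_norm_sq, real_inner_comm q p]
    ring
  constructor
  · apply sq_le_imp dist_nonneg
    rw [mul_pow, egd, edxy]
    exact key.1
  · apply sq_le_imp (by positivity)
    rw [mul_pow, egd, edxy]
    exact key.2

lemma radialMap_surjective {φ : ℝ → ℝ} {ρ : ℝ} (hρ : 0 ≤ ρ) (hφ0 : φ 0 = 0)
    (hcont : Continuous φ) (hid : ∀ r, ρ ≤ r → φ r = r) (c : E) :
    Function.Surjective (radialMap φ c) := by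
  intro z
  rcases eq_or_ne z c with rfl | hzc
  · exact ⟨z, by simp [radialMap, hφ0]⟩
  · have htpos : 0 < ‖z - c‖ := by
      rw [norm_pos_iff, sub_ne_zero]; exact hzc
    set t := ‖z - c‖ with htdef
    have h1 : t ≤ max t ρ := le_max_left _ _
    have h2 : φ (max t ρ) = max t ρ := hid _ (le_max_right _ _)
    have hmem : t ∈ Set.Icc (φ 0) (φ (max t ρ)) := by
      rw [hφ0, h2]
      exact ⟨htpos.le, h1⟩
    obtain ⟨r, hr, hφr⟩ := intermediate_value_Icc (le_trans htpos.le h1) hcont.continuousOn hmem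
    have hrpos : 0 < r := by
      rcases eq_or_lt_of_le hr.1 with h | h
      · exfalso; rw [← h, hφ0] at hφr; exact htpos.ne' hφr.symm
      · exact h
    refine ⟨c + (r / t) • (z - c), ?_⟩
    rw [radialMap, add_sub_cancel_left, norm_smul, Real.norm_eq_abs, abs_div,
      abs_of_nonneg hrpos.le, abs_of_nonneg htpos.le, div_mul_cancel₀ _ htpos.ne']
    rw [hφr, smul_smul]
    have hone : t / r * (r / t) = 1 := by
      field_simp
    rw [hone, one_smul]
    abel

end Radial

/-! ### slope lemmas -/

lemma slope_linear {lam L aa : ℝ} (bb : ℝ) (h1 : lam ≤ aa) (h2 : aa ≤ L) :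
    ∀ r s : ℝ, r ≤ s → lam * (s - r) ≤ (aa * s + bb) - (aa * r + bb) ∧
      (aa * s + bb) - (aa * r + bb) ≤ L * (s - r) := by
  intro r s h
  have hΔ : 0 ≤ s - r := by linarith
  constructor
  · nlinarith [mul_le_mul_of_nonneg_right h1 hΔ]
  · nlinarith [mul_le_mul_of_nonneg_right h2 hΔ]

lemma slope_min {lam L : ℝ} {f g : ℝ → ℝ}
    (hf : ∀ r s : ℝ, r ≤ s → lam * (s - r) ≤ f s - f r ∧ f s - f r ≤ L * (s - r))
    (hg : ∀ r s : ℝ, r ≤ s → lam * (s - r) ≤ g s - g r ∧ g s - g r ≤ L * (s - r)) :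
    ∀ r s : ℝ, r ≤ s → lam * (s - r) ≤ min (f s) (g s) - min (f r) (g r) ∧
      min (f s) (g s) - min (f r) (g r) ≤ L * (s - r) := by
  intro r s h
  obtain ⟨hf1, hf2⟩ := hf r s h
  obtain ⟨hg1, hg2⟩ := hg r s h
  constructor
  · rcases le_total (f s) (g s) with hc | hc
    · rw [min_eq_left hc]; linarith [min_le_left (f r) (g r)]
    · rw [min_eq_right hc]; linarith [min_le_right (f r) (g r)]
  · rcases le_total (f r) (g r) with hc | hc
    · rw [min_eq_left hc]; linarith [min_le_left (f s) (g s)]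
    · rw [min_eq_right hc]; linarith [min_le_right (f s) (g s)]

lemma slope_max {lam L : ℝ} {f g : ℝ → ℝ}
    (hf : ∀ r s : ℝ, r ≤ s → lam * (s - r) ≤ f s - f r ∧ f s - f r ≤ L * (s - r))
    (hg : ∀ r s : ℝ, r ≤ s → lam * (s - r) ≤ g s - g r ∧ g s - g r ≤ L * (s - r)) :
    ∀ r s : ℝ, r ≤ s → lam * (s - r) ≤ max (f s) (g s) - max (f r) (g r) ∧
      max (f s) (g s) - max (f r) (g r) ≤ L * (s - r) := by
  intro r s h
  obtain ⟨hf1, hf2⟩ := hf r s h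
  obtain ⟨hg1, hg2⟩ := hg r s h
  constructor
  · rcases le_total (f r) (g r) with hc | hc
    · rw [max_eq_right hc]; linarith [le_max_right (f s) (g s)]
    · rw [max_eq_left hc]; linarith [le_max_left (f s) (g s)]
  · rcases le_total (f s) (g s) with hc | hc
    · rw [max_eq_right hc]; linarith [le_max_right (f r) (g r)]
    · rw [max_eq_left hc]; linarith [le_max_left (f r) (g r)]

/-! ### folded maps -/

section Fold
variable {E : Type*} [NormedAddCommGroup E] [InnerProductSpace ℝ E]
variable (g : E → E → E) (cen : E → E) (ρ : ℝ)

def foldMap (l : List E) (x : E) : E := l.foldr g x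

lemma foldMap_nil (x : E) : foldMap g [] x = x := rfl

lemma foldMap_cons (q : E) (l : List E) (x : E) :
    foldMap g (q :: l) x = g q (foldMap g l x) := rfl

lemma foldMap_eq_of_far (hfix : ∀ q x, ρ < dist x (cen q) → g q x = x)
    (l : List E) (x : E) (hx : ∀ q ∈ l, ρ < dist x (cen q)) : foldMap g l x = x := by
  induction l with
  | nil => rfl
  | cons q0 l ih =>
    rw [foldMap_cons, ih (fun q hq => hx q (List.mem_cons_of_mem _ hq)),
      hfix _ _ (hx q0 List.mem_cons_self)]

lemma foldMap_eq_of_mem (hfix : ∀ q x, ρ < dist x (cen q) → g q x = x)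
    (hball : ∀ q x, dist x (cen q) ≤ ρ → dist (g q x) (cen q) ≤ ρ)
    (l : List E) (hpair : l.Pairwise (fun q q' => 2 * ρ < dist (cen q) (cen q')))
    (q : E) (hq : q ∈ l) (x : E) (hx : dist x (cen q) ≤ ρ) :
    foldMap g l x = g q x := by
  induction l with
  | nil => cases hq
  | cons q0 l ih =>
    obtain ⟨hp1, hp2⟩ := List.pairwise_cons.mp hpair
    rcases List.mem_cons.mp hq with rfl | hq'
    · rw [foldMap_cons, foldMap_eq_of_far g cen ρ hfix l x ?_]
      intro q' hq'
      have h2 := hp1 q' hq'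
      have h3 := dist_triangle (cen q) x (cen q')
      have h4 : dist (cen q) x = dist x (cen q) := dist_comm _ _
      linarith
    · rw [foldMap_cons, ih hp2 hq']
      apply hfix
      have h1 : dist (g q x) (cen q) ≤ ρ := hball q x hx
      have h2 := hp1 q hq'
      have h3 := dist_triangle (cen q0) (g q x) (cen q)
      have h4 : dist (cen q0) (g q x) = dist (g q x) (cen q0) := dist_comm _ _
      linarith [dist_comm (cen q) (cen q0) ▸ h2]

lemma foldMap_bounds {lam L : ℝ} (hlam : 0 ≤ lam) (hL : 0 ≤ L)
    (hg : ∀ (q : E) (x y : E), lam * dist x y ≤ dist (g q x) (g q y) ∧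
      dist (g q x) (g q y) ≤ L * dist x y)
    (l : List E) (x y : E) :
    lam ^ l.length * dist x y ≤ dist (foldMap g l x) (foldMap g l y) ∧
      dist (foldMap g l x) (foldMap g l y) ≤ L ^ l.length * dist x y := by
  induction l with
  | nil => simp [foldMap_nil]
  | cons q0 l ih =>
    obtain ⟨ih1, ih2⟩ := ih
    obtain ⟨h1, h2⟩ := hg q0 (foldMap g l x) (foldMap g l y)
    rw [foldMap_cons, foldMap_cons, List.length_cons]
    constructor
    · calc lam ^ (l.length + 1) * dist x y = lam * (lam ^ l.length * dist x y) := by ring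
      _ ≤ lam * dist (foldMap g l x) (foldMap g l y) :=
          mul_le_mul_of_nonneg_left ih1 hlam
      _ ≤ _ := h1
    · calc dist (g q0 (foldMap g l x)) (g q0 (foldMap g l y))
          ≤ L * dist (foldMap g l x) (foldMap g l y) := h2
      _ ≤ L * (L ^ l.length * dist x y) := mul_le_mul_of_nonneg_left ih2 hL
      _ = L ^ (l.length + 1) * dist x y := by ring

lemma foldMap_surjective (hg : ∀ q : E, Function.Surjective (g q)) (l : List E) :
    Function.Surjective (foldMap g l) := by
  induction l with
  | nil => exact fun z => ⟨z, rfl⟩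
  | cons q0 l ih =>
    intro z
    obtain ⟨w, hw⟩ := hg q0 z
    obtain ⟨x, hx⟩ := ih w
    exact ⟨x, by rw [foldMap_cons, hx, hw]⟩

end Fold

/-! ### Euclidean coordinate lemmas -/

lemma coord_le_dist {d : ℕ} (x y : EuclideanSpace ℝ (Fin d)) (i : Fin d) :
    |x i - y i| ≤ dist x y := by
  rw [EuclideanSpace.dist_eq]
  have h1 : |x i - y i| = Real.sqrt ((x i - y i) ^ 2) := (Real.sqrt_sq_eq_abs _).symm
  rw [h1]
  apply Real.sqrt_le_sqrt
  have := Finset.single_le_sum (f := fun j => dist (x j) (y j) ^ 2)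
    (fun j _ => by positivity) (Finset.mem_univ i)
  simpa [Real.dist_eq] using this

lemma dist_le_of_coord {d : ℕ} (x y : EuclideanSpace ℝ (Fin d)) (M : ℝ) (hM : 0 ≤ M)
    (h : ∀ i, |x i - y i| ≤ M) : dist x y ≤ d * M := by
  rw [EuclideanSpace.dist_eq]
  have h1 : ∑ i, dist (x i) (y i) ^ 2 ≤ (d : ℝ) * M ^ 2 := by
    calc ∑ i, dist (x i) (y i) ^ 2 ≤ ∑ _i : Fin d, M ^ 2 := by
          apply Finset.sum_le_sum
          intro j _
          have := h j
          rw [Real.dist_eq]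
          nlinarith [abs_nonneg (x j - y j)]
    _ = (d : ℝ) * M ^ 2 := by simp [Finset.sum_const]
  calc Real.sqrt (∑ i, dist (x i) (y i) ^ 2) ≤ Real.sqrt ((d : ℝ) * M ^ 2) :=
        Real.sqrt_le_sqrt h1
  _ ≤ Real.sqrt (((d : ℝ) * M) ^ 2) := by
      apply Real.sqrt_le_sqrt
      have hdd : (d : ℝ) ≤ (d : ℝ) ^ 2 := by
        have : d ≤ d ^ 2 := Nat.le_self_pow (by norm_num) d
        exact_mod_cast this
      nlinarith [mul_le_mul_of_nonneg_right hdd (sq_nonneg M)]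
  _ = (d : ℝ) * M := Real.sqrt_sq (by positivity)

end Stmt11Aux

set_option maxHeartbeats 4000000 in
/-- Crenel boundaries, part 1 (Proposition 5.3(1)). -/
theorem stmt_11 (d : ℕ) (hd : 1 ≤ d) (r0 : ℝ) (hr0 : 0 < r0) (hr0' : r0 ≤ 1)
    (Λ : Set (EuclideanSpace ℝ (Fin d)))
    (hsep : ∀ p ∈ Λ, ∀ q ∈ Λ, p ≠ q → r0 ≤ dist p q)
    (ℓ : ℝ) (hℓ : 1 ≤ ℓ) (a : EuclideanSpace ℝ (Fin d)) :
    ∃ (Γ : Set (EuclideanSpace ℝ (Fin d)))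
      (f : EuclideanSpace ℝ (Fin d) → EuclideanSpace ℝ (Fin d)),
      IsCompact Γ ∧
      Set.BijOn f (cube d a ℓ) Γ ∧
      (∃ c C : ℝ, 0 < c ∧
        ∀ x ∈ cube d a ℓ, ∀ y ∈ cube d a ℓ,
          c * dist x y ≤ dist (f x) (f y) ∧ dist (f x) (f y) ≤ C * dist x y) ∧
      (∀ x ∈ cube d a ℓ, dist (f x) x ≤ 1) ∧
      (∀ p ∈ Λ ∩ Γ, r0 / 8 ≤ Metric.infDist p (frontier Γ)) := by
  classical
  have hd1 : (1:ℝ) ≤ (d:ℝ) := by exact_mod_cast hd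
  have hdpos : (0:ℝ) < d := by linarith
  set K := cube d a ℓ with hKdef
  obtain ⟨δ0, hδ0def⟩ : ∃ x : ℝ, x = r0 / (64 * d) := ⟨_, rfl⟩
  obtain ⟨Dd, hDdef⟩ : ∃ x : ℝ, x = 3 * r0 / 16 := ⟨_, rfl⟩
  obtain ⟨ρb, hρdef⟩ : ∃ x : ℝ, x = r0 / 4 := ⟨_, rfl⟩
  obtain ⟨mm, hmmdef⟩ : ∃ x : ℝ, x = (ρb - Dd) / (ρb - δ0) := ⟨_, rfl⟩
  obtain ⟨Lip, hLipdef⟩ : ∃ x : ℝ, x = Dd / δ0 := ⟨_, rfl⟩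
  have hδ0pos : 0 < δ0 := by rw [hδ0def]; exact div_pos hr0 (by linarith)
  have hδ0le : δ0 ≤ r0 / 64 := by
    rw [hδ0def, div_le_div_iff₀ (by linarith) (by norm_num)]
    nlinarith
  have hδ0D : δ0 < Dd := by rw [hDdef]; linarith
  have hDρ : Dd < ρb := by rw [hDdef, hρdef]; linarith
  have hρpos : 0 < ρb := by rw [hρdef]; linarith
  have hmm0 : 0 < mm := by rw [hmmdef]; exact div_pos (by linarith) (by linarith)
  have hmm1 : mm ≤ 1 := by
    rw [hmmdef, div_le_one (by linarith)]; linarith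
  have hLip1 : 1 ≤ Lip := by
    rw [hLipdef, le_div_iff₀ hδ0pos]; linarith
  have hkey : mm * (ρb - δ0) = ρb - Dd := by
    rw [hmmdef]; exact div_mul_cancel₀ _ (by linarith)
  have hLipδ : Lip * δ0 = Dd := by
    rw [hLipdef]; exact div_mul_cancel₀ _ hδ0pos.ne'
  obtain ⟨φ, hφdef⟩ : ∃ φ : ℝ → ℝ,
      φ = fun r => min (Lip * r + 0) (max (mm * r + (Dd - mm * δ0)) (1 * r + 0)) := ⟨_, rfl⟩
  have hslope : ∀ r s : ℝ, r ≤ s → mm * (s - r) ≤ φ s - φ r ∧ φ s - φ r ≤ Lip * (s - r) := by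
    have hf := Stmt11Aux.slope_linear (lam := mm) (L := Lip) (aa := Lip) 0 (by linarith) le_rfl
    have hg1 := Stmt11Aux.slope_linear (lam := mm) (L := Lip) (aa := mm) (Dd - mm * δ0)
      le_rfl (by linarith)
    have hg2 := Stmt11Aux.slope_linear (lam := mm) (L := Lip) (aa := 1) 0 hmm1 hLip1
    rw [hφdef]
    exact Stmt11Aux.slope_min hf (Stmt11Aux.slope_max hg1 hg2)
  have hmmδ : mm * δ0 ≤ δ0 := by nlinarith
  have hφ0 : φ 0 = 0 := by
    simp only [hφdef, mul_zero, zero_add, add_zero, one_mul]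
    rw [max_eq_left (by linarith : (0:ℝ) ≤ Dd - mm * δ0),
      min_eq_left (by linarith : (0:ℝ) ≤ Dd - mm * δ0)]
  have hφnn : ∀ r, 0 ≤ r → 0 ≤ φ r := by
    intro r h
    have := (hslope 0 r h).1
    nlinarith
  have hφD : ∀ r, δ0 ≤ r → Dd ≤ φ r := by
    intro r h
    have h1 := (hslope δ0 r h).1
    have hφδ0 : φ δ0 = Dd := by
      simp only [hφdef, add_zero, one_mul]
      rw [hLipδ]
      have e1 : mm * δ0 + (Dd - mm * δ0) = Dd := by ring
      rw [e1, max_eq_left (by linarith), min_self]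
    rw [hφδ0] at h1
    nlinarith [mul_nonneg hmm0.le (sub_nonneg.mpr h)]
  have hφle : ∀ r, r ≤ ρb → φ r ≤ ρb := by
    intro r h
    have h2 : mm * r + (Dd - mm * δ0) ≤ ρb := by
      nlinarith [mul_le_mul_of_nonneg_left h hmm0.le]
    have h3 : 1 * r + 0 ≤ ρb := by linarith
    calc φ r ≤ max (mm * r + (Dd - mm * δ0)) (1 * r + 0) := by
          rw [hφdef]; exact min_le_right _ _
    _ ≤ ρb := max_le h2 h3
  have hφid : ∀ r, ρb ≤ r → φ r = r := by
    intro r h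
    have hr0'' : 0 ≤ r := by linarith
    have h1 : mm * r + (Dd - mm * δ0) ≤ r := by
      nlinarith [mul_nonneg (sub_nonneg.mpr hmm1) (sub_nonneg.mpr h)]
    have h2 : r ≤ Lip * r := by
      have := mul_le_mul_of_nonneg_right hLip1 hr0''
      linarith
    simp only [hφdef, add_zero, one_mul]
    rw [max_eq_right h1, min_eq_right h2]
  have hφcont : Continuous φ := by
    rw [hφdef]
    apply Continuous.min
    · exact (continuous_const.mul continuous_id).add continuous_const
    · exact Continuous.max ((continuous_const.mul continuous_id).add continuous_const)
        ((continuous_const.mul continuous_id).add continuous_const)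
  -- the centers
  obtain ⟨cen, hcendef⟩ : ∃ cen : EuclideanSpace ℝ (Fin d) → EuclideanSpace ℝ (Fin d),
      cen = fun q => (WithLp.equiv 2 (Fin d → ℝ)).symm (fun i =>
        if |q i - (a i + ℓ / 2)| < δ0 then a i + ℓ / 2 - δ0
        else if |q i - (a i - ℓ / 2)| < δ0 then a i - ℓ / 2 + δ0 else q i) := ⟨_, rfl⟩
  have hcenap : ∀ q i, cen q i =
      if |q i - (a i + ℓ / 2)| < δ0 then a i + ℓ / 2 - δ0
      else if |q i - (a i - ℓ / 2)| < δ0 then a i - ℓ / 2 + δ0 else q i := by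
    intro q i
    rw [hcendef]
    rfl
  have hℓδ : 2 * δ0 ≤ ℓ := by linarith
  have hcen1 : ∀ q i, |cen q i - q i| ≤ 2 * δ0 := by
    intro q i
    rw [hcenap]
    split_ifs with h1 h2
    · rw [abs_lt] at h1; rw [abs_le]; constructor <;> linarith
    · rw [abs_lt] at h2; rw [abs_le]; constructor <;> linarith
    · have e : q i - q i = 0 := sub_self _
      rw [e, abs_zero]
      positivity
  have hcen2 : ∀ q i, δ0 ≤ |cen q i - (a i + ℓ / 2)| ∧ δ0 ≤ |cen q i - (a i - ℓ / 2)| := by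
    intro q i
    rw [hcenap]
    split_ifs with h1 h2
    · constructor
      · have e : a i + ℓ / 2 - δ0 - (a i + ℓ / 2) = -δ0 := by ring
        rw [e, abs_neg, abs_of_nonneg hδ0pos.le]
      · have e : a i + ℓ / 2 - δ0 - (a i - ℓ / 2) = ℓ - δ0 := by ring
        rw [e, abs_of_nonneg (by linarith)]; linarith
    · constructor
      · have e : a i - ℓ / 2 + δ0 - (a i + ℓ / 2) = -(ℓ - δ0) := by ring
        rw [e, abs_neg, abs_of_nonneg (by linarith)]; linarith
      · have e : a i - ℓ / 2 + δ0 - (a i - ℓ / 2) = δ0 := by ring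
        rw [e, abs_of_nonneg hδ0pos.le]
    · exact ⟨not_lt.mp h1, not_lt.mp h2⟩
  have hcenq : ∀ q, dist (cen q) q ≤ r0 / 32 := by
    intro q
    have h := Stmt11Aux.dist_le_of_coord (cen q) q (2 * δ0) (by positivity) (hcen1 q)
    calc dist (cen q) q ≤ d * (2 * δ0) := h
    _ = r0 / 32 := by rw [hδ0def]; field_simp; ring
  -- cube facts
  have hcontProj : ∀ i : Fin d, Continuous fun x : EuclideanSpace ℝ (Fin d) => x i := by
    intro i
    exact (EuclideanSpace.proj i).continuous
  have hKclosed : IsClosed K := by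
    have he : K = ⋂ i, {x : EuclideanSpace ℝ (Fin d) | |x i - a i| ≤ ℓ / 2} := by
      ext x
      simp [hKdef, cube, Set.mem_iInter]
    rw [he]
    apply isClosed_iInter
    intro i
    exact isClosed_le (((hcontProj i).sub continuous_const).abs) continuous_const
  have hKsubset : K ⊆ closedBall a (d * ℓ) := by
    intro x hx
    rw [mem_closedBall]
    have h := Stmt11Aux.dist_le_of_coord x a (ℓ / 2) (by linarith) hx
    calc dist x a ≤ d * (ℓ / 2) := h
    _ ≤ d * ℓ := by nlinarith
  have hKcompact : IsCompact K :=
    (isCompact_closedBall a (d * ℓ)).of_isClosed_subset hKclosed hKsubset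
  have haK : a ∈ K := by
    intro i
    simp only [sub_self, abs_zero]
    linarith
  have hKne : K ≠ univ := by
    intro h
    have hwK : ((WithLp.equiv 2 (Fin d → ℝ)).symm (fun i => a i + ℓ)) ∈ K := by
      rw [h]; exact mem_univ _
    have hwi := hwK ⟨0, hd⟩
    have he : ((WithLp.equiv 2 (Fin d → ℝ)).symm (fun i => a i + ℓ)) ⟨0, hd⟩
        = a ⟨0, hd⟩ + ℓ := rfl
    rw [he] at hwi
    have : |ℓ| ≤ ℓ / 2 := by
      have e2 : a ⟨0, hd⟩ + ℓ - a ⟨0, hd⟩ = ℓ := by ring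
      rwa [e2] at hwi
    rw [abs_of_pos (by linarith)] at this
    linarith
  have hfrK : frontier K ⊆ {x : EuclideanSpace ℝ (Fin d) | ∃ i, |x i - a i| = ℓ / 2} := by
    intro x hx
    by_contra hcon
    have hcon' : ∀ i, |x i - a i| ≠ ℓ / 2 := by
      simpa [mem_setOf_eq, not_exists] using hcon
    have hxK : x ∈ K := by
      have h1 : x ∈ closure K := frontier_subset_closure hx
      rwa [hKclosed.closure_eq] at h1
    have hlt : ∀ i, |x i - a i| < ℓ / 2 := fun i => lt_of_le_of_ne (hxK i) (hcon' i)
    have hopen : IsOpen {y : EuclideanSpace ℝ (Fin d) | ∀ i, |y i - a i| < ℓ / 2} := by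
      have he : {y : EuclideanSpace ℝ (Fin d) | ∀ i, |y i - a i| < ℓ / 2}
          = ⋂ i, {y : EuclideanSpace ℝ (Fin d) | |y i - a i| < ℓ / 2} := by
        ext y
        simp [Set.mem_iInter]
      rw [he]
      apply isOpen_iInter_of_finite
      intro i
      exact isOpen_lt (((hcontProj i).sub continuous_const).abs) continuous_const
    have hsub : {y : EuclideanSpace ℝ (Fin d) | ∀ i, |y i - a i| < ℓ / 2} ⊆ K :=
      fun y hy i => (hy i).le
    have hint : x ∈ interior K := (hopen.subset_interior_iff.mpr hsub) hlt
    exact hx.2 hint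
  have hfrKne : (frontier K).Nonempty := by
    by_contra h
    rw [not_nonempty_iff_eq_empty] at h
    rcases isClopen_iff.mp (isClopen_iff_frontier_eq_empty.mpr h) with h1 | h1
    · exact absurd (h1 ▸ haK) (notMem_empty a)
    · exact hKne h1
  -- the treated set
  obtain ⟨S, hSdef⟩ : ∃ S : Set (EuclideanSpace ℝ (Fin d)),
      S = {q | q ∈ Λ ∧ ∃ x ∈ frontier K, dist q x < 5 * r0 / 8} := ⟨_, rfl⟩
  have hSsubΛ : S ⊆ Λ := by rw [hSdef]; exact fun q hq => hq.1
  have hSfin : S.Finite := by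
    have hSsub : S ⊆ closedBall a (d * ℓ + 5 * r0 / 8) := by
      intro q hq
      rw [hSdef] at hq
      obtain ⟨x, hx, hdx⟩ := hq.2
      have hxK : x ∈ K := by
        have h1 : x ∈ closure K := frontier_subset_closure hx
        rwa [hKclosed.closure_eq] at h1
      have h2 := hKsubset hxK
      rw [mem_closedBall] at h2 ⊢
      calc dist q a ≤ dist q x + dist x a := dist_triangle _ _ _
      _ ≤ 5 * r0 / 8 + d * ℓ := by linarith
      _ = d * ℓ + 5 * r0 / 8 := by ring
    have htb : TotallyBounded S :=
      (isCompact_closedBall a (d * ℓ + 5 * r0 / 8)).totallyBounded.subset hSsub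
    obtain ⟨t, htfin, htsub⟩ := Metric.totallyBounded_iff.mp htb (r0 / 2) (by linarith)
    have hcover : S ⊆ ⋃ y ∈ t, (S ∩ ball y (r0 / 2)) := by
      intro q hq
      obtain ⟨y, hy, hball⟩ := Set.mem_iUnion₂.mp (htsub hq)
      exact Set.mem_biUnion hy ⟨hq, hball⟩
    apply Set.Finite.subset _ hcover
    apply Set.Finite.biUnion htfin
    intro y _
    apply Set.Subsingleton.finite
    intro p hp p' hp'
    by_contra hne
    have h1 := hsep p (hSsubΛ hp.1) p' (hSsubΛ hp'.1) hne
    have h2 : dist p y < r0 / 2 := mem_ball.mp hp.2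
    have h3 : dist p' y < r0 / 2 := mem_ball.mp hp'.2
    have h4 : dist p p' ≤ dist p y + dist y p' := dist_triangle _ _ _
    rw [dist_comm y p'] at h4
    linarith
  obtain ⟨lst, hlstdef⟩ : ∃ lst : List (EuclideanSpace ℝ (Fin d)),
      lst = hSfin.toFinset.toList := ⟨_, rfl⟩
  have hlst_mem : ∀ q, q ∈ lst ↔ q ∈ S := by
    intro q
    rw [hlstdef, Finset.mem_toList, Set.Finite.mem_toFinset]
  have hlst_nodup : lst.Nodup := by rw [hlstdef]; exact Finset.nodup_toList _
  -- the maps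
  obtain ⟨g, hgdef⟩ : ∃ g : EuclideanSpace ℝ (Fin d) → EuclideanSpace ℝ (Fin d) →
      EuclideanSpace ℝ (Fin d), g = fun q => Stmt11Aux.radialMap φ (cen q) := ⟨_, rfl⟩
  have hslope' : ∀ r s : ℝ, 0 ≤ r → r ≤ s →
      mm * (s - r) ≤ φ s - φ r ∧ φ s - φ r ≤ Lip * (s - r) := fun r s _ h => hslope r s h
  have hgnorm : ∀ q x, dist (g q x) (cen q) = φ (dist x (cen q)) := by
    intro q x
    rw [hgdef, dist_eq_norm, Stmt11Aux.radialMap_norm hφ0 hφnn, ← dist_eq_norm]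
  have hgfix : ∀ q x, ρb < dist x (cen q) → g q x = x := by
    intro q x h
    rw [hgdef]
    apply Stmt11Aux.radialMap_of_eq
    rw [← dist_eq_norm]
    exact hφid _ h.le
  have hgball : ∀ q x, dist x (cen q) ≤ ρb → dist (g q x) (cen q) ≤ ρb := by
    intro q x h
    rw [hgnorm]
    exact hφle _ h
  have hgbnd : ∀ q x y, mm * dist x y ≤ dist (g q x) (g q y) ∧
      dist (g q x) (g q y) ≤ Lip * dist x y := by
    intro q x y
    rw [hgdef]
    exact Stmt11Aux.radialMap_dist_bounds hmm0 hφ0 hslope' (cen q) x y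
  have hgsurj : ∀ q, Function.Surjective (g q) := by
    intro q
    rw [hgdef]
    exact Stmt11Aux.radialMap_surjective hρpos.le hφ0 hφcont hφid (cen q)
  have hpair : lst.Pairwise (fun q q' => 2 * ρb < dist (cen q) (cen q')) := by
    have hnd : lst.Pairwise (· ≠ ·) := hlst_nodup
    refine List.Pairwise.imp_of_mem ?_ hnd
    intro q q' hq hq' hne
    have h1 := hsep q (hSsubΛ ((hlst_mem q).mp hq)) q' (hSsubΛ ((hlst_mem q').mp hq')) hne
    have h2 := hcenq q
    have h3 := hcenq q'
    have h4 := dist_triangle4 q (cen q) (cen q') q'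
    have h5 : dist q (cen q) = dist (cen q) q := dist_comm _ _
    have h6 : dist (cen q') q' ≤ r0 / 32 := h3
    rw [hρdef]
    linarith
  obtain ⟨f, hfdef⟩ : ∃ f : EuclideanSpace ℝ (Fin d) → EuclideanSpace ℝ (Fin d),
      f = Stmt11Aux.foldMap g lst := ⟨_, rfl⟩
  obtain ⟨n, hndef⟩ : ∃ n : ℕ, n = lst.length := ⟨_, rfl⟩
  have hbounds : ∀ x y, mm ^ n * dist x y ≤ dist (f x) (f y) ∧
      dist (f x) (f y) ≤ Lip ^ n * dist x y := by
    intro x y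
    rw [hfdef, hndef]
    exact Stmt11Aux.foldMap_bounds g hmm0.le (by linarith) hgbnd lst x y
  have hmmn : 0 < mm ^ n := pow_pos hmm0 n
  have hLipn : 0 < Lip ^ n := by positivity
  have hinj : Function.Injective f := by
    intro x y h
    have h1 := (hbounds x y).1
    rw [h, dist_self] at h1
    have h2 : dist x y ≤ 0 := by
      by_contra h3
      push_neg at h3
      nlinarith
    exact dist_le_zero.mp h2
  have hsurjf : Function.Surjective f := by
    rw [hfdef]
    exact Stmt11Aux.foldMap_surjective g hgsurj lst
  have hcontf : Continuous f := by
    have hl : LipschitzWith ⟨Lip ^ n, hLipn.le⟩ f := by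
      refine LipschitzWith.of_dist_le_mul ?_
      intro x y
      exact (hbounds x y).2
    exact hl.continuous
  obtain ⟨e, hedef⟩ : ∃ e : EuclideanSpace ℝ (Fin d) ≃ EuclideanSpace ℝ (Fin d),
      e = Equiv.ofBijective f ⟨hinj, hsurjf⟩ := ⟨_, rfl⟩
  have hecoe : ⇑e = f := by rw [hedef]; rfl
  have hcontinv : Continuous e.symm := by
    have hl : LipschitzWith ⟨(mm ^ n)⁻¹, by positivity⟩ e.symm := by
      refine LipschitzWith.of_dist_le_mul ?_
      intro z w
      have h1 := (hbounds (e.symm z) (e.symm w)).1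
      have h2 : f (e.symm z) = z := by rw [← hecoe]; exact e.apply_symm_apply z
      have h3 : f (e.symm w) = w := by rw [← hecoe]; exact e.apply_symm_apply w
      rw [h2, h3] at h1
      show dist (e.symm z) (e.symm w) ≤ (mm ^ n)⁻¹ * dist z w
      rw [inv_mul_eq_div, le_div_iff₀ hmmn]
      linarith [mul_comm (dist (e.symm z) (e.symm w)) (mm ^ n)]
    exact hl.continuous
  have hconte : Continuous e.toFun := by
    have h1 : e.toFun = f := hecoe
    rw [h1]
    exact hcontf
  have hHfr : f '' frontier K = frontier (f '' K) := by
    have hH := Homeomorph.image_frontier (Homeomorph.mk e hconte hcontinv) K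
    have hc : ⇑(Homeomorph.mk e hconte hcontinv) = f := hecoe
    rwa [hc] at hH
  -- displacement
  have hdisp : ∀ x, dist (f x) x ≤ r0 / 2 := by
    intro x
    by_cases hex : ∃ q ∈ lst, dist x (cen q) ≤ ρb
    · obtain ⟨q, hq, hdq⟩ := hex
      rw [hfdef, Stmt11Aux.foldMap_eq_of_mem g cen ρb hgfix hgball lst hpair q hq x hdq]
      have h1 := hgball q x hdq
      have h2 : dist (cen q) x = dist x (cen q) := dist_comm _ _
      calc dist (g q x) x ≤ dist (g q x) (cen q) + dist (cen q) x := dist_triangle _ _ _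
      _ ≤ ρb + ρb := by linarith
      _ = r0 / 2 := by rw [hρdef]; ring
    · push_neg at hex
      rw [hfdef, Stmt11Aux.foldMap_eq_of_far g cen ρb hgfix lst x hex, dist_self]
      linarith
  -- key frontier estimate
  have hkey2 : ∀ p ∈ Λ, ∀ x ∈ frontier K, r0 / 8 ≤ dist p (f x) := by
    intro p hp x hx
    by_cases hpS : p ∈ S
    · have hplst : p ∈ lst := (hlst_mem p).mpr hpS
      by_cases hex : ∃ q ∈ lst, dist x (cen q) ≤ ρb
      · obtain ⟨q, hq, hdq⟩ := hex
        have hfx : f x = g q x := by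
          rw [hfdef]
          exact Stmt11Aux.foldMap_eq_of_mem g cen ρb hgfix hgball lst hpair q hq x hdq
        rcases eq_or_ne q p with heq | hne
        · -- p's own ball
          subst heq
          have hδx : δ0 ≤ dist x (cen q) := by
            obtain ⟨i, hi⟩ := hfrK hx
            rcases (abs_eq (by linarith : (0:ℝ) ≤ ℓ / 2)).mp hi with h | h
            · have h1 := (hcen2 q i).1
              have hxi : x i = a i + ℓ / 2 := by linarith
              have hco := Stmt11Aux.coord_le_dist x (cen q) i
              calc δ0 ≤ |cen q i - (a i + ℓ / 2)| := h1
              _ = |x i - cen q i| := by rw [abs_sub_comm, hxi]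
              _ ≤ dist x (cen q) := hco
            · have h1 := (hcen2 q i).2
              have hxi : x i = a i - ℓ / 2 := by linarith
              have hco := Stmt11Aux.coord_le_dist x (cen q) i
              calc δ0 ≤ |cen q i - (a i - ℓ / 2)| := h1
              _ = |x i - cen q i| := by rw [abs_sub_comm, hxi]
              _ ≤ dist x (cen q) := hco
          have h1 : Dd ≤ dist (f x) (cen q) := by
            rw [hfx, hgnorm]
            exact hφD _ hδx
          have h2 := hcenq q
          have h3 := dist_triangle (f x) q (cen q)
          have h4 : dist q (cen q) = dist (cen q) q := dist_comm _ _
          have h6 : dist q (f x) = dist (f x) q := dist_comm _ _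
          rw [hDdef] at h1
          linarith
        · -- another ball
          have hqS := (hlst_mem q).mp hq
          have hsep2 := hsep p hp q (hSsubΛ hqS) (Ne.symm hne)
          have h1 : dist (f x) (cen q) ≤ ρb := by
            rw [hfx]
            exact hgball q x hdq
          have h2 := hcenq q
          have h3 := dist_triangle4 p (f x) (cen q) q
          have h4 : dist (cen q) q = dist (cen q) q := rfl
          rw [dist_comm p q] at hsep2
          rw [hρdef] at h1
          linarith [dist_comm q p ▸ hsep2]
      · -- far from all balls
        push_neg at hex
        have hfx : f x = x := by
          rw [hfdef]
          exact Stmt11Aux.foldMap_eq_of_far g cen ρb hgfix lst x hex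
        have h1 := hex p hplst
        have h2 := hcenq p
        have h3 := dist_triangle x p (cen p)
        have h4 : dist p (cen p) = dist (cen p) p := dist_comm _ _
        have h5 : dist p (f x) = dist x p := by rw [hfx, dist_comm]
        rw [hρdef] at h1
        linarith
    · -- untreated point
      have hfar : 5 * r0 / 8 ≤ dist p x := by
        by_contra hlt
        push_neg at hlt
        apply hpS
        rw [hSdef]
        exact ⟨hp, x, hx, by linarith⟩
      have h2 := hdisp x
      have h3 := dist_triangle p (f x) x
      have h4 : dist (f x) x = dist (f x) x := rfl
      linarith [dist_triangle p x (f x), dist_comm x (f x)]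
  -- assemble
  refine ⟨f '' K, f, hKcompact.image hcontf, hinj.injOn.bijOn_image, ⟨mm ^ n, Lip ^ n, hmmn,
    fun x _ y _ => hbounds x y⟩, ?_, ?_⟩
  · intro x _
    calc dist (f x) x ≤ r0 / 2 := hdisp x
    _ ≤ 1 := by linarith
  · intro p hp
    have hfrΓne : (frontier (f '' K)).Nonempty := by
      rw [← hHfr]
      exact hfrKne.image f
    by_contra hcon
    push_neg at hcon
    obtain ⟨z, hz, hzlt⟩ := (Metric.infDist_lt_iff hfrΓne).mp hcon
    rw [← hHfr] at hz
    obtain ⟨x, hx, rfl⟩ := hz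
    exact absurd hzlt (not_lt.mpr (hkey2 p hp.1 x hx))
end

section
/- Crenel boundaries, part 2: existence of a cube avoiding the charges (Proposition 5.3(2)). There exists a constant C>0 depending only on d such that: if 0<r_0<1, ℓ≥1, a∈ℝ^d, Λ⊂ℝ^d satisfies |p−q|≥r_0 for all p≠q∈Λ, and 0<r_1 ≤ C r_0^d ℓ^{−(d−1)}, then there exists τ∈[−1,1] such that dist(p, ∂K_{ℓ+τ}(a)) ≥ r_1 for every p∈Λ. -/
open MeasureTheory Metric Set

set_option maxHeartbeats 1000000

section helperlemmas
set_option linter.unusedSectionVars false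
variable {d : ℕ} [Nonempty (Fin d)]

noncomputable def Mx (a x : EuclideanSpace ℝ (Fin d)) : ℝ :=
  Finset.univ.sup' Finset.univ_nonempty (fun i => |x i - a i|)

lemma coord_le_dist (x y : EuclideanSpace ℝ (Fin d)) (i : Fin d) :
    |x i - y i| ≤ dist x y := by
  rw [EuclideanSpace.dist_eq]
  rw [show |x i - y i| = Real.sqrt ((x i - y i)^2) from (Real.sqrt_sq_eq_abs _).symm]
  apply Real.sqrt_le_sqrt
  have := Finset.single_le_sum (f := fun j => dist (x j) (y j)^2)
    (fun j _ => sq_nonneg _) (Finset.mem_univ i)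
  simpa [Real.dist_eq, sq_abs] using this

lemma Mx_le {a x : EuclideanSpace ℝ (Fin d)} {c : ℝ} (h : ∀ i, |x i - a i| ≤ c) :
    Mx a x ≤ c := Finset.sup'_le _ _ fun i _ => h i

lemma le_Mx (a x : EuclideanSpace ℝ (Fin d)) (i : Fin d) : |x i - a i| ≤ Mx a x :=
  Finset.le_sup' (fun j => |x j - a j|) (Finset.mem_univ i)

lemma exists_Mx (a x : EuclideanSpace ℝ (Fin d)) : ∃ i, Mx a x = |x i - a i| := by
  obtain ⟨i, _, h⟩ := Finset.exists_mem_eq_sup' (Finset.univ_nonempty) (fun i => |x i - a i|)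
  exact ⟨i, h⟩

lemma Mx_le_add (a x y : EuclideanSpace ℝ (Fin d)) : Mx a x ≤ Mx a y + dist x y := by
  apply Mx_le
  intro i
  calc |x i - a i| ≤ |y i - a i| + |x i - y i| := by
        have h := abs_sub (x i - a i) (y i - a i)
        have h2 : x i - a i - (y i - a i) = x i - y i := by ring
        calc |x i - a i| = |y i - a i + (x i - a i - (y i - a i))| := by ring_nf
          _ ≤ |y i - a i| + |x i - a i - (y i - a i)| := abs_add_le _ _
          _ = |y i - a i| + |x i - y i| := by rw [h2]
    _ ≤ Mx a y + dist x y := add_le_add (le_Mx a y i) (coord_le_dist x y i)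

lemma abs_Mx_sub (a x y : EuclideanSpace ℝ (Fin d)) : |Mx a x - Mx a y| ≤ dist x y := by
  rw [abs_sub_le_iff]
  constructor
  · linarith [Mx_le_add a x y]
  · linarith [Mx_le_add a y x, dist_comm x y]

lemma mem_cube {a x : EuclideanSpace ℝ (Fin d)} {l : ℝ} :
    x ∈ cube d a l ↔ Mx a x ≤ l / 2 := by
  constructor
  · exact fun h => Mx_le h
  · exact fun h i => (le_Mx a x i).trans h

lemma Mx_lipschitz (a : EuclideanSpace ℝ (Fin d)) : LipschitzWith 1 (Mx a) :=
  LipschitzWith.of_dist_le_mul fun x y => by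
    rw [Real.dist_eq]; push_cast; rw [one_mul]; exact abs_Mx_sub a x y

lemma cube_isClosed (a : EuclideanSpace ℝ (Fin d)) (l : ℝ) : IsClosed (cube d a l) := by
  have : cube d a l = (Mx a) ⁻¹' (Iic (l / 2)) := by
    ext x; simp [mem_cube, Set.mem_preimage]
  rw [this]
  exact IsClosed.preimage (Mx_lipschitz a).continuous isClosed_Iic

lemma interior_cube (a : EuclideanSpace ℝ (Fin d)) (l : ℝ) :
    interior (cube d a l) = {x | Mx a x < l / 2} := by
  apply le_antisymm
  · intro x hx
    obtain ⟨ε, hε, hball⟩ := Metric.isOpen_iff.mp isOpen_interior x hx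
    obtain ⟨i, hi⟩ := exists_Mx a x
    set t : ℝ := if 0 ≤ x i - a i then ε / 2 else -(ε / 2) with ht
    have hyt : |t| = ε / 2 := by
      rw [ht]; split <;> simp [abs_of_nonneg, abs_of_nonpos, le_of_lt hε] <;> positivity
    set y : EuclideanSpace ℝ (Fin d) := x + EuclideanSpace.single i t with hy
    have hdist : dist y x = ε / 2 := by
      rw [dist_eq_norm, hy, add_sub_cancel_left, EuclideanSpace.norm_single, Real.norm_eq_abs, hyt]
    have hycube : y ∈ cube d a l := interior_subset (hball (by rw [mem_ball, hdist]; linarith))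
    have hyi : |y i - a i| = |x i - a i| + ε / 2 := by
      have : y i = x i + t := by
        rw [hy]; simp [EuclideanSpace.single_apply]
      rw [this, ht]
      rcases le_or_gt 0 (x i - a i) with h | h
      · rw [if_pos h]; rw [abs_of_nonneg h, abs_of_nonneg (by linarith)]; ring
      · rw [if_neg (not_le.mpr h)]; rw [abs_of_neg h, abs_of_nonpos (by linarith)]; ring
    have := hycube i
    rw [hyi] at this
    simp only [Set.mem_setOf_eq]
    rw [hi]; linarith
  · intro x hx
    simp only [Set.mem_setOf_eq] at hx
    rw [mem_interior]
    refine ⟨ball x (l / 2 - Mx a x), ?_, isOpen_ball, mem_ball_self (by linarith)⟩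
    intro y hy
    rw [mem_cube]
    have h1 : Mx a y ≤ Mx a x + dist y x := by
      have := abs_Mx_sub a y x; rw [abs_sub_le_iff] at this; linarith [this.1]
    rw [mem_ball] at hy
    linarith

lemma frontier_cube (a : EuclideanSpace ℝ (Fin d)) (l : ℝ) :
    frontier (cube d a l) = {x | Mx a x = l / 2} := by
  rw [(cube_isClosed a l).frontier_eq, interior_cube]
  ext x
  simp only [Set.mem_diff, Set.mem_setOf_eq, mem_cube]
  constructor
  · rintro ⟨h1, h2⟩; linarith [not_lt.mp h2]
  · intro h; exact ⟨le_of_eq h, by linarith⟩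

lemma frontier_cube_nonempty (a : EuclideanSpace ℝ (Fin d)) {l : ℝ} (hl : 0 ≤ l) :
    (frontier (cube d a l)).Nonempty := by
  rw [frontier_cube]
  obtain ⟨i⟩ := (inferInstance : Nonempty (Fin d))
  refine ⟨a + EuclideanSpace.single i (l / 2), ?_⟩
  simp only [Set.mem_setOf_eq]
  have hcoord : ∀ j, (a + EuclideanSpace.single i (l / 2)) j - a j
      = if j = i then l / 2 else 0 := by
    intro j; simp [EuclideanSpace.single_apply]
  apply le_antisymm
  · apply Mx_le; intro j; rw [hcoord]; split
    · rw [abs_of_nonneg (by linarith)]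
    · simp; linarith
  · have := le_Mx a (a + EuclideanSpace.single i (l / 2)) i
    rw [hcoord, if_pos rfl, abs_of_nonneg (by linarith)] at this
    exact this
lemma cubeSet_eq (d : ℕ) (a : EuclideanSpace ℝ (Fin d)) (R : ℝ) :
    {x : EuclideanSpace ℝ (Fin d) | ∀ i, |x i - a i| ≤ R}
      = (MeasurableEquiv.toLp 2 (Fin d → ℝ)).symm ⁻¹'
        (Set.univ.pi fun i => Icc (a i - R) (a i + R)) := by
  ext x
  have hxi : ∀ i, (MeasurableEquiv.toLp 2 (Fin d → ℝ)).symm x i = x i := fun i => rfl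
  simp only [Set.mem_setOf_eq, Set.mem_preimage, Set.mem_pi, Set.mem_univ, forall_true_left,
    Set.mem_Icc, hxi]
  constructor
  · intro h i
    have := h i; rw [abs_le] at this
    constructor <;> [linarith [this.1]; linarith [this.2]]
  · intro h i
    rw [abs_le]
    constructor <;> [linarith [(h i).1]; linarith [(h i).2]]

lemma openCubeSet_eq (d : ℕ) (a : EuclideanSpace ℝ (Fin d)) (R : ℝ) :
    {x : EuclideanSpace ℝ (Fin d) | ∀ i, |x i - a i| < R}
      = (MeasurableEquiv.toLp 2 (Fin d → ℝ)).symm ⁻¹'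
        (Set.univ.pi fun i => Ioo (a i - R) (a i + R)) := by
  ext x
  have hxi : ∀ i, (MeasurableEquiv.toLp 2 (Fin d → ℝ)).symm x i = x i := fun i => rfl
  simp only [Set.mem_setOf_eq, Set.mem_preimage, Set.mem_pi, Set.mem_univ, forall_true_left,
    Set.mem_Ioo, hxi]
  constructor
  · intro h i
    have := h i; rw [abs_lt] at this
    constructor <;> [linarith [this.1]; linarith [this.2]]
  · intro h i
    rw [abs_lt]
    constructor <;> [linarith [(h i).1]; linarith [(h i).2]]

lemma volume_cubeSet (d : ℕ) (a : EuclideanSpace ℝ (Fin d)) (R : ℝ) :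
    volume {x : EuclideanSpace ℝ (Fin d) | ∀ i, |x i - a i| ≤ R}
      = ENNReal.ofReal (2 * R) ^ d := by
  rw [cubeSet_eq,
    (EuclideanSpace.volume_preserving_symm_measurableEquiv_toLp (Fin d)).measure_preimage
      ((MeasurableSet.univ_pi fun i => measurableSet_Icc).nullMeasurableSet),
    volume_pi_pi]
  simp only [Real.volume_Icc]
  rw [Finset.prod_congr rfl (fun i _ => by rw [show a i + R - (a i - R) = 2 * R by ring]),
    Finset.prod_const, Finset.card_univ, Fintype.card_fin]

lemma volume_openCubeSet (d : ℕ) (a : EuclideanSpace ℝ (Fin d)) (R : ℝ) :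
    volume {x : EuclideanSpace ℝ (Fin d) | ∀ i, |x i - a i| < R}
      = ENNReal.ofReal (2 * R) ^ d := by
  rw [openCubeSet_eq,
    (EuclideanSpace.volume_preserving_symm_measurableEquiv_toLp (Fin d)).measure_preimage
      ((MeasurableSet.univ_pi fun i => measurableSet_Ioo).nullMeasurableSet),
    volume_pi_pi]
  simp only [Real.volume_Ioo]
  rw [Finset.prod_congr rfl (fun i _ => by rw [show a i + R - (a i - R) = 2 * R by ring]),
    Finset.prod_const, Finset.card_univ, Fintype.card_fin]

lemma measurable_openCubeSet (d : ℕ) (a : EuclideanSpace ℝ (Fin d)) (R : ℝ) :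
    MeasurableSet {x : EuclideanSpace ℝ (Fin d) | ∀ i, |x i - a i| < R} := by
  rw [openCubeSet_eq]
  exact (MeasurableEquiv.toLp 2 (Fin d → ℝ)).symm.measurable
    (MeasurableSet.univ_pi fun i => measurableSet_Ioo)

lemma pow_sub_pow_le' {a b : ℝ} (hb : 0 ≤ b) (hab : b ≤ a) (n : ℕ) :
    a ^ (n + 1) - b ^ (n + 1) ≤ (n + 1) * (a - b) * a ^ n := by
  induction n with
  | zero => simp
  | succ n ih =>
    have ha : 0 ≤ a := hb.trans hab
    have hbn : b ^ (n + 1) ≤ a ^ (n + 1) := pow_le_pow_left₀ hb hab _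
    have hpow : (0:ℝ) ≤ a ^ n := pow_nonneg ha n
    have h1 := mul_le_mul_of_nonneg_left ih ha
    have h2 : (a - b) * b ^ (n + 1) ≤ (a - b) * a ^ (n + 1) :=
      mul_le_mul_of_nonneg_left hbn (by linarith)
    push_cast
    calc a ^ (n + 1 + 1) - b ^ (n + 1 + 1)
        = a * (a ^ (n + 1) - b ^ (n + 1)) + (a - b) * b ^ (n + 1) := by ring
      _ ≤ a * ((n + 1) * (a - b) * a ^ n) + (a - b) * a ^ (n + 1) := by push_cast at h1 ⊢; linarith
      _ = (↑n + 1 + 1) * (a - b) * a ^ (n + 1) := by ring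

end helperlemmas

/-- Crenel boundaries, part 2: existence of a cube avoiding the charges
(Proposition 5.3(2)). -/
theorem stmt_13 (d : ℕ) (hd : 1 ≤ d) :
    ∃ C : ℝ, 0 < C ∧
      ∀ (r0 ℓ : ℝ) (a : EuclideanSpace ℝ (Fin d)) (Λ : Set (EuclideanSpace ℝ (Fin d))) (r1 : ℝ),
        0 < r0 → r0 < 1 → 1 ≤ ℓ →
        (∀ p ∈ Λ, ∀ q ∈ Λ, p ≠ q → r0 ≤ dist p q) →
        0 < r1 → r1 ≤ C * r0 ^ (d : ℝ) * ℓ ^ (-((d : ℝ) - 1)) →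
        ∃ τ ∈ Set.Icc (-1 : ℝ) 1,
          ∀ p ∈ Λ, r1 ≤ Metric.infDist p (frontier (cube d a (ℓ + τ))) := by
  haveI : Nonempty (Fin d) := ⟨⟨0, hd⟩⟩
  obtain ⟨m, rfl⟩ : ∃ m, d = m + 1 := ⟨d - 1, (Nat.succ_pred_eq_of_pos hd).symm⟩
  have hv0 : volume (ball (0 : EuclideanSpace ℝ (Fin (m+1))) 1) ≠ 0 :=
    (measure_ball_pos _ _ one_pos).ne'
  have hvt : volume (ball (0 : EuclideanSpace ℝ (Fin (m+1))) 1) ≠ ⊤ := measure_ball_lt_top.ne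
  obtain ⟨w, hw⟩ : ∃ w : ℝ, w = (volume (ball (0 : EuclideanSpace ℝ (Fin (m+1))) 1)).toReal :=
    ⟨_, rfl⟩
  have hw0 : 0 < w := hw ▸ ENNReal.toReal_pos hv0 hvt
  obtain ⟨K, hK⟩ : ∃ K : ℝ, K = 12 * ((m : ℝ) + 1) * 4 ^ m := ⟨_, rfl⟩
  have hK0 : 0 < K := by rw [hK]; positivity
  obtain ⟨C, hC⟩ : ∃ C : ℝ, C = min (1/2) (w / (K * 2 ^ (m+3))) := ⟨_, rfl⟩
  have hC0 : 0 < C := by rw [hC]; exact lt_min one_half_pos (by positivity)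
  refine ⟨C, hC0, ?_⟩
  intro r0 ℓ a Λ r1 hr0 hr01 hℓ hsep hr1 hr1le
  have hC2 : C ≤ 1/2 := hC ▸ min_le_left _ _
  have hCw : C ≤ w / (K * 2 ^ (m+3)) := hC ▸ min_le_right _ _
  have hℓ0 : (0:ℝ) < ℓ := by linarith
  -- normalize the rpow hypothesis
  have hrpow1 : r0 ^ (((m+1 : ℕ)) : ℝ) = r0 ^ (m+1) := Real.rpow_natCast r0 (m+1)
  have hexp : (-((((m+1 : ℕ)) : ℝ) - 1)) = -((m : ℕ) : ℝ) := by push_cast; ring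
  have hrpow2 : ℓ ^ (-((((m+1 : ℕ)) : ℝ) - 1)) = (ℓ ^ m)⁻¹ := by
    rw [hexp, Real.rpow_neg hℓ0.le, Real.rpow_natCast]
  rw [hrpow1, hrpow2] at hr1le
  have hℓm1 : (1:ℝ) ≤ ℓ ^ m := one_le_pow₀ hℓ
  have hℓmpos : (0:ℝ) < ℓ ^ m := by positivity
  have hr0m : r0 ^ (m+1) ≤ 1 := pow_le_one₀ hr0.le hr01.le
  have hinv : (ℓ ^ m)⁻¹ ≤ 1 := inv_le_one_of_one_le₀ hℓm1
  have hinv0 : (0:ℝ) ≤ (ℓ ^ m)⁻¹ := by positivity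
  have hr1C : r1 ≤ C := by
    have h1 : C * r0 ^ (m+1) ≤ C := by nlinarith
    have h2 : C * r0 ^ (m+1) * (ℓ ^ m)⁻¹ ≤ C * r0 ^ (m+1) :=
      mul_le_of_le_one_right (by positivity) hinv
    linarith
  have hr1half : r1 ≤ 1/2 := by linarith
  -- the annulus
  have hvolA : volume ({x : EuclideanSpace ℝ (Fin (m+1)) | ∀ i, |x i - a i| ≤ ℓ/2 + 3/2}
      \ {x : EuclideanSpace ℝ (Fin (m+1)) | ∀ i, |x i - a i| < ℓ/2 - 3/2})
      ≤ ENNReal.ofReal (K * ℓ ^ m) := by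
    have hsubset : {x : EuclideanSpace ℝ (Fin (m+1)) | ∀ i, |x i - a i| < ℓ/2 - 3/2}
        ⊆ {x : EuclideanSpace ℝ (Fin (m+1)) | ∀ i, |x i - a i| ≤ ℓ/2 + 3/2} :=
      fun x hx i => le_of_lt ((hx i).trans_le (by linarith))
    have hSoutVol : volume {x : EuclideanSpace ℝ (Fin (m+1)) | ∀ i, |x i - a i| ≤ ℓ/2 + 3/2}
        = ENNReal.ofReal (ℓ + 3) ^ (m+1) := by
      rw [volume_cubeSet (m+1) a (ℓ/2 + 3/2), show 2 * (ℓ/2 + 3/2) = ℓ + 3 by ring]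
    have hSinVol : volume {x : EuclideanSpace ℝ (Fin (m+1)) | ∀ i, |x i - a i| < ℓ/2 - 3/2}
        = ENNReal.ofReal (ℓ - 3) ^ (m+1) := by
      rw [volume_openCubeSet (m+1) a (ℓ/2 - 3/2), show 2 * (ℓ/2 - 3/2) = ℓ - 3 by ring]
    rw [measure_diff hsubset (measurable_openCubeSet (m+1) a (ℓ/2 - 3/2)).nullMeasurableSet
      (by rw [hSinVol]; exact ENNReal.pow_ne_top ENNReal.ofReal_ne_top),
      hSoutVol, hSinVol]
    rw [tsub_le_iff_right]
    set b : ℝ := max (ℓ - 3) 0 with hb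
    have hb0 : 0 ≤ b := le_max_right _ _
    have hofb : ENNReal.ofReal (ℓ - 3) = ENNReal.ofReal b := by
      rcases le_total (ℓ - 3) 0 with h | h
      · rw [ENNReal.ofReal_of_nonpos h, hb, max_eq_right h, ENNReal.ofReal_zero]
      · rw [hb, max_eq_left h]
    rw [hofb, ← ENNReal.ofReal_pow hb0, ← ENNReal.ofReal_pow (by linarith : (0:ℝ) ≤ ℓ + 3),
      ← ENNReal.ofReal_add (by positivity) (by positivity)]
    apply ENNReal.ofReal_le_ofReal
    rcases le_or_gt ℓ 3 with hl3 | hl3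
    · have hbz : b = 0 := max_eq_right (by linarith)
      rw [hbz, zero_pow (by omega : m + 1 ≠ 0), add_zero]
      have h1 : (ℓ+3)^(m+1) ≤ (4*ℓ)^(m+1) := pow_le_pow_left₀ (by linarith) (by linarith) _
      have h2 : (4*ℓ)^(m+1) = 4^(m+1) * (ℓ^m * ℓ) := by rw [mul_pow]; ring
      have h3 : (4:ℝ)^(m+1) * (ℓ^m * ℓ) ≤ 4^(m+1) * (ℓ^m * 3) :=
        mul_le_mul_of_nonneg_left (mul_le_mul_of_nonneg_left hl3 (by positivity))
          (by positivity)
      have hK' : (4:ℝ)^(m+1) * 3 ≤ K := by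
        rw [hK, pow_succ]
        nlinarith [mul_nonneg (Nat.cast_nonneg (α := ℝ) m)
          (pow_nonneg (by norm_num : (0:ℝ) ≤ 4) m)]
      have h4 : (4:ℝ)^(m+1) * (ℓ^m * 3) = (4^(m+1) * 3) * ℓ^m := by ring
      calc (ℓ+3)^(m+1) ≤ (4*ℓ)^(m+1) := h1
        _ = 4^(m+1) * (ℓ^m * ℓ) := h2
        _ ≤ 4^(m+1) * (ℓ^m * 3) := h3
        _ = (4^(m+1) * 3) * ℓ^m := h4
        _ ≤ K * ℓ^m := mul_le_mul_of_nonneg_right hK' hℓmpos.le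
    · have hbz : b = ℓ - 3 := max_eq_left (by linarith)
      rw [hbz]
      have h1 := pow_sub_pow_le' (by linarith : (0:ℝ) ≤ ℓ - 3) (by linarith : ℓ - 3 ≤ ℓ + 3) m
      have h2 : ((ℓ:ℝ)+3)^m ≤ (2*ℓ)^m := pow_le_pow_left₀ (by linarith) (by linarith) m
      have h3 : ((2:ℝ)*ℓ)^m = 2^m * ℓ^m := mul_pow 2 ℓ m
      have h4 : (2:ℝ)^m ≤ 4^m := pow_le_pow_left₀ (by norm_num) (by norm_num) m
      have h5 : ((m:ℝ)+1) * ((ℓ+3) - (ℓ-3)) * (ℓ+3)^m ≤ ((m:ℝ)+1) * 6 * (2^m * ℓ^m) := by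
        have hh : ((ℓ:ℝ)+3) - (ℓ-3) = 6 := by ring
        rw [hh]
        have := h2.trans_eq h3
        nlinarith [Nat.cast_nonneg (α := ℝ) m]
      have h6 : ((m:ℝ)+1) * 6 * (2^m * ℓ^m) ≤ K * ℓ^m := by
        rw [hK]
        have h7 : (6:ℝ) * 2^m ≤ 12 * 4^m := by nlinarith [pow_pos (by norm_num : (0:ℝ) < 2) m]
        nlinarith [mul_nonneg (Nat.cast_nonneg (α := ℝ) m) hℓmpos.le,
          mul_le_mul_of_nonneg_right h7 (mul_nonneg (by positivity : (0:ℝ) ≤ (m:ℝ)+1) hℓmpos.le)]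
      linarith
  -- balls around near-boundary points sit in the annulus
  have hballsub : ∀ p, p ∈ Λ → |Mx a p - ℓ/2| ≤ 1 → ball p (r0/2) ⊆
      ({x : EuclideanSpace ℝ (Fin (m+1)) | ∀ i, |x i - a i| ≤ ℓ/2 + 3/2}
        \ {x : EuclideanSpace ℝ (Fin (m+1)) | ∀ i, |x i - a i| < ℓ/2 - 3/2}) := by
    intro p _ hpM y hy
    rw [mem_ball] at hy
    have hMy := abs_Mx_sub a y p
    rw [abs_sub_le_iff] at hMy
    rw [abs_le] at hpM
    have hdyp : dist y p < 1/2 := by linarith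
    constructor
    · intro i
      have h := le_Mx a y i
      linarith [hMy.1]
    · intro hin
      obtain ⟨i, hi⟩ := exists_Mx a y
      have := hin i
      rw [← hi] at this
      linarith [hMy.2]
  -- cardinality bound for finite separated subsets
  have hcard : ∀ T : Finset (EuclideanSpace ℝ (Fin (m+1))),
      (↑T : Set (EuclideanSpace ℝ (Fin (m+1)))) ⊆ {p ∈ Λ | |Mx a p - ℓ/2| ≤ 1} →
      (T.card : ℝ) * ((r0/2)^(m+1) * w) ≤ K * ℓ^m := by
    intro T hT
    have hdisj : (↑T : Set (EuclideanSpace ℝ (Fin (m+1)))).PairwiseDisjoint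
        (fun p => ball p (r0/2)) := by
      intro p hp q hq hpq
      apply ball_disjoint_ball
      have := hsep p (hT hp).1 q (hT hq).1 hpq
      linarith
    have hsum := measure_biUnion_finset (μ := volume) hdisj (fun p _ => measurableSet_ball)
    have hUsub := Set.iUnion₂_subset fun p hp => hballsub p (hT hp).1 (hT hp).2
    have hballvol : ∀ p : EuclideanSpace ℝ (Fin (m+1)), volume (ball p (r0/2))
        = ENNReal.ofReal ((r0/2)^(m+1)) * volume (ball (0 : EuclideanSpace ℝ (Fin (m+1))) 1) := by
      intro p
      rw [Measure.addHaar_ball volume p (by positivity : (0:ℝ) ≤ r0/2),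
        finrank_euclideanSpace_fin]
    have h1 : (T.card : ENNReal) * (ENNReal.ofReal ((r0/2)^(m+1))
        * volume (ball (0 : EuclideanSpace ℝ (Fin (m+1))) 1)) ≤ ENNReal.ofReal (K * ℓ^m) := by
      calc (T.card : ENNReal) * (ENNReal.ofReal ((r0/2)^(m+1))
            * volume (ball (0 : EuclideanSpace ℝ (Fin (m+1))) 1))
          = ∑ p ∈ T, volume (ball p (r0/2)) := by
            rw [Finset.sum_congr rfl (fun p _ => hballvol p), Finset.sum_const, nsmul_eq_mul]
        _ = volume (⋃ p ∈ T, ball p (r0/2)) := hsum.symm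
        _ ≤ _ := measure_mono hUsub
        _ ≤ _ := hvolA
    have hfin1 : (T.card : ENNReal) * (ENNReal.ofReal ((r0/2)^(m+1))
        * volume (ball (0 : EuclideanSpace ℝ (Fin (m+1))) 1)) ≠ ⊤ :=
      ENNReal.mul_ne_top (ENNReal.natCast_ne_top _) (ENNReal.mul_ne_top ENNReal.ofReal_ne_top hvt)
    have h2 := (ENNReal.toReal_le_toReal hfin1 ENNReal.ofReal_ne_top).mpr h1
    rw [ENNReal.toReal_mul, ENNReal.toReal_mul, ENNReal.toReal_natCast,
      ENNReal.toReal_ofReal (by positivity), ENNReal.toReal_ofReal (by positivity), ← hw] at h2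
    exact h2
  -- the near-boundary set is finite
  have hxpos : (0:ℝ) < (r0/2)^(m+1) * w := by positivity
  have hfin : Set.Finite {p ∈ Λ | |Mx a p - ℓ/2| ≤ 1} := by
    by_contra hinf
    obtain ⟨t, htsub, htfin, htcard⟩ := Set.Infinite.exists_subset_ncard_eq hinf
      (⌊(K * ℓ^m) / ((r0/2)^(m+1) * w)⌋₊ + 1)
    have hc := hcard htfin.toFinset (by rwa [Set.Finite.coe_toFinset])
    rw [← Set.ncard_eq_toFinset_card t htfin, htcard] at hc
    · have hle : ((⌊(K * ℓ^m) / ((r0/2)^(m+1) * w)⌋₊ + 1 : ℕ) : ℝ)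
          ≤ (K * ℓ^m) / ((r0/2)^(m+1) * w) := (le_div_iff₀ hxpos).mpr hc
      have := Nat.lt_floor_add_one ((K * ℓ^m) / ((r0/2)^(m+1) * w))
      push_cast at hle this
      linarith
  -- measure of the bad set in ℝ
  have hTcard := hcard hfin.toFinset (by rw [Set.Finite.coe_toFinset])
  have hhalf : (hfin.toFinset.card : ℝ) * (2*r1) ≤ 1/2 := by
    have h_n : (hfin.toFinset.card : ℝ) ≤ (K * ℓ^m) / ((r0/2)^(m+1) * w) :=
      (le_div_iff₀ hxpos).mpr hTcard
    have hstep : (hfin.toFinset.card : ℝ) * (2*r1)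
        ≤ ((K * ℓ^m) / ((r0/2)^(m+1) * w)) * (2 * (C * r0^(m+1) * (ℓ^m)⁻¹)) := by
      apply mul_le_mul h_n (by linarith) (by positivity) (by positivity)
    have heq : ((K * ℓ^m) / ((r0/2)^(m+1) * w)) * (2 * (C * r0^(m+1) * (ℓ^m)⁻¹))
        = 2^(m+2) * K * C / w := by
      field_simp
      have hX : (1/2:ℝ)^m * 2^m = 1 := by rw [← mul_pow]; norm_num
      linear_combination (-(r0 * r0^m * 2)) * hX
    have hfinal : 2^(m+2) * K * C / w ≤ 1/2 := by
      have hle2 : 2^(m+2) * K * C / w ≤ 2^(m+2) * K * (w / (K * 2^(m+3))) / w := by gcongr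
      have heq2 : (2:ℝ)^(m+2) * K * (w / (K * 2^(m+3))) / w = 1/2 := by
        have hp : (2:ℝ)^(m+3) = 2 * 2^(m+2) := by
          rw [show m+3 = (m+2)+1 by ring, pow_succ]; ring
        rw [hp]
        field_simp
      linarith
    rw [heq] at hstep
    linarith
  have hBvol : volume (⋃ p ∈ hfin.toFinset, Ioo (Mx a p - ℓ/2 - r1) (Mx a p - ℓ/2 + r1))
      ≤ ENNReal.ofReal (1/2) := by
    calc volume (⋃ p ∈ hfin.toFinset, Ioo (Mx a p - ℓ/2 - r1) (Mx a p - ℓ/2 + r1))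
        ≤ ∑ p ∈ hfin.toFinset, volume (Ioo (Mx a p - ℓ/2 - r1) (Mx a p - ℓ/2 + r1)) :=
          measure_biUnion_finset_le _ _
      _ = (hfin.toFinset.card : ENNReal) * ENNReal.ofReal (2*r1) := by
          rw [Finset.sum_congr rfl (fun p _ => by
            rw [Real.volume_Ioo, show (Mx a p - ℓ/2 + r1) - (Mx a p - ℓ/2 - r1) = 2*r1 by ring]),
            Finset.sum_const, nsmul_eq_mul]
      _ = ENNReal.ofReal ((hfin.toFinset.card : ℝ) * (2*r1)) := by
          rw [ENNReal.ofReal_mul (by positivity : (0:ℝ) ≤ (hfin.toFinset.card : ℝ)),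
            ENNReal.ofReal_natCast]
      _ ≤ ENNReal.ofReal (1/2) := ENNReal.ofReal_le_ofReal hhalf
  -- find a good shift s
  have hgood : ∃ s ∈ Ioo (-(1/2) : ℝ) (1/2),
      s ∉ ⋃ p ∈ hfin.toFinset, Ioo (Mx a p - ℓ/2 - r1) (Mx a p - ℓ/2 + r1) := by
    by_contra h
    push_neg at h
    have hsub : Ioo (-(1/2) : ℝ) (1/2)
        ⊆ ⋃ p ∈ hfin.toFinset, Ioo (Mx a p - ℓ/2 - r1) (Mx a p - ℓ/2 + r1) := h
    have hmono := (measure_mono hsub).trans hBvol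
    rw [Real.volume_Ioo, show (1/2 : ℝ) - (-(1/2)) = 1 by ring] at hmono
    rw [ENNReal.ofReal_le_ofReal_iff (by norm_num)] at hmono
    linarith
  obtain ⟨s, hsIoo, hsB⟩ := hgood
  obtain ⟨hs1, hs2⟩ := hsIoo
  refine ⟨2*s, ⟨by linarith, by linarith⟩, ?_⟩
  intro p hp
  have hl0 : (0:ℝ) ≤ ℓ + 2*s := by linarith
  have hkey : r1 ≤ |Mx a p - (ℓ + 2*s)/2| := by
    have heq : Mx a p - (ℓ + 2*s)/2 = (Mx a p - ℓ/2) - s := by ring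
    by_cases hcase : |Mx a p - ℓ/2| ≤ 1
    · have hpT : p ∈ hfin.toFinset := (Set.Finite.mem_toFinset hfin).mpr ⟨hp, hcase⟩
      have hnot : s ∉ Ioo (Mx a p - ℓ/2 - r1) (Mx a p - ℓ/2 + r1) :=
        fun hmem => hsB (Set.mem_biUnion hpT hmem)
      rw [Set.mem_Ioo, not_and_or, not_lt, not_lt] at hnot
      rw [heq]
      rcases hnot with h | h
      · calc r1 ≤ (Mx a p - ℓ/2) - s := by linarith
          _ ≤ |(Mx a p - ℓ/2) - s| := le_abs_self _
      · calc r1 ≤ -((Mx a p - ℓ/2) - s) := by linarith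
          _ ≤ |(Mx a p - ℓ/2) - s| := neg_le_abs _
    · push_neg at hcase
      have h1 : |Mx a p - ℓ/2| - |s| ≤ |(Mx a p - ℓ/2) - s| := abs_sub_abs_le_abs_sub _ _
      have hsabs : |s| ≤ 1/2 := abs_le.mpr ⟨by linarith, by linarith⟩
      rw [heq]
      linarith
  rw [frontier_cube a (ℓ + 2*s)]
  have hnon : ({x : EuclideanSpace ℝ (Fin (m+1)) | Mx a x = (ℓ + 2*s)/2}).Nonempty := by
    have := frontier_cube_nonempty a hl0
    rwa [frontier_cube a (ℓ + 2*s)] at this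
  haveI := hnon.to_subtype
  rw [Metric.infDist_eq_iInf]
  apply le_ciInf
  rintro ⟨z, hz⟩
  have hzd := abs_Mx_sub a p z
  simp only [Set.mem_setOf_eq] at hz
  rw [hz] at hzd
  calc r1 ≤ |Mx a p - (ℓ + 2*s)/2| := hkey
    _ ≤ dist p z := hzd
end
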